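/- If x is a nonnegative integer such that 6x+1, 12x+1, and 18x+1 are all prime, then the product n = (6x+1)(12x+1)(18x+1) is a Carmichael number, i.e., n is composite, squarefree, and for every prime p dividing n, p - 1 divides n - 1 (assuming x ≥ 1). -/
import Mathlib


/-- Chernick's theorem: if `6x+1`, `12x+1`, `18x+1` are all prime (`x ≥ 1`),
then `n = (6x+1)(12x+1)(18x+1)` is a Carmichael number: composite,
squarefree, and `p - 1 ∣ n - 1` for every prime `p ∣ n`. -/
theorem chernick_carmichael (x : ℕ) (hx : 1 ≤ x)
    (h1 : Nat.Prime (6 * x + 1)) (h2 : Nat.Prime (12 * x + 1))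
    (h3 : Nat.Prime (18 * x + 1)) :
    ¬ Nat.Prime ((6 * x + 1) * (12 * x + 1) * (18 * x + 1)) ∧
    1 < (6 * x + 1) * (12 * x + 1) * (18 * x + 1) ∧
    Squarefree ((6 * x + 1) * (12 * x + 1) * (18 * x + 1)) ∧
    ∀ p : ℕ, p.Prime → p ∣ (6 * x + 1) * (12 * x + 1) * (18 * x + 1) →
      (p - 1) ∣ ((6 * x + 1) * (12 * x + 1) * (18 * x + 1) - 1) := by
  have hab : Nat.Coprime (6 * x + 1) (12 * x + 1) :=
    (Nat.coprime_primes h1 h2).2 (by omega)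
  have hac : Nat.Coprime (6 * x + 1) (18 * x + 1) :=
    (Nat.coprime_primes h1 h3).2 (by omega)
  have hbc : Nat.Coprime (12 * x + 1) (18 * x + 1) :=
    (Nat.coprime_primes h2 h3).2 (by omega)
  have hn : (6 * x + 1) * (12 * x + 1) * (18 * x + 1) - 1
      = 36 * x * (36 * x ^ 2 + 11 * x + 1) := by
    have : (6 * x + 1) * (12 * x + 1) * (18 * x + 1)
        = 36 * x * (36 * x ^ 2 + 11 * x + 1) + 1 := by ring
    omega
  refine ⟨?_, ?_, ?_, ?_⟩
  · exact Nat.not_prime_mul (by nlinarith) (by omega)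
  · nlinarith
  · exact (Nat.squarefree_mul (Nat.Coprime.mul hac hbc)).2
      ⟨(Nat.squarefree_mul hab).2 ⟨h1.squarefree, h2.squarefree⟩, h3.squarefree⟩
  · intro p hp hpd
    rcases (hp.dvd_mul.mp hpd) with hd | hd
    · rcases (hp.dvd_mul.mp hd) with hd | hd
      · have : p = 6 * x + 1 := (Nat.prime_dvd_prime_iff_eq hp h1).1 hd
        subst this
        rw [hn, show 6 * x + 1 - 1 = 6 * x from rfl]
        exact ⟨6 * (36 * x ^ 2 + 11 * x + 1), by ring⟩
      · have : p = 12 * x + 1 := (Nat.prime_dvd_prime_iff_eq hp h2).1 hd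
        subst this
        rw [hn, show 12 * x + 1 - 1 = 12 * x from rfl]
        exact ⟨3 * (36 * x ^ 2 + 11 * x + 1), by ring⟩
    · have : p = 18 * x + 1 := (Nat.prime_dvd_prime_iff_eq hp h3).1 hd
      subst this
      rw [hn, show 18 * x + 1 - 1 = 18 * x from rfl]
      exact ⟨2 * (36 * x ^ 2 + 11 * x + 1), by ring⟩
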